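/- The function H satisfies: (i) H(b*_{r+q}, y_l) = 1; (ii) H(y_u, y_u) = 1; (iii) y ↦ H(b*_{r+q}, y) is strictly increasing on (y_l, y_u); (iv) y ↦ H(y, y) is strictly increasing on (y_l, y_u). -/

import Mathlib

open Real Set Filter

noncomputable def gam1 (μ σ ρ : ℝ) : ℝ := Real.sqrt (μ^2/σ^4 + 2*ρ/σ^2) - μ/σ^2

noncomputable def gam2 (μ σ ρ : ℝ) : ℝ := -Real.sqrt (μ^2/σ^4 + 2*ρ/σ^2) - μ/σ^2

/-- The classical optimal dividend boundary `b*_ρ`. -/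
noncomputable def bstar (μ σ ρ : ℝ) : ℝ :=
  Real.log ((gam2 μ σ ρ)^2 / (gam1 μ σ ρ)^2) / (gam1 μ σ ρ - gam2 μ σ ρ)

/-- The classical value function `V_ρ`. -/
noncomputable def Vfun (μ σ ρ x : ℝ) : ℝ :=
  if x < bstar μ σ ρ then
    (Real.exp (gam1 μ σ ρ * x) - Real.exp (gam2 μ σ ρ * x)) /
      (gam1 μ σ ρ * Real.exp (gam1 μ σ ρ * bstar μ σ ρ) -
        gam2 μ σ ρ * Real.exp (gam2 μ σ ρ * bstar μ σ ρ))
  else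
    (Real.exp (gam1 μ σ ρ * bstar μ σ ρ) - Real.exp (gam2 μ σ ρ * bstar μ σ ρ)) /
      (gam1 μ σ ρ * Real.exp (gam1 μ σ ρ * bstar μ σ ρ) -
        gam2 μ σ ρ * Real.exp (gam2 μ σ ρ * bstar μ σ ρ)) + x - bstar μ σ ρ

/-- `δ(y) = e^{γ₁(r+q)y} − e^{γ₂(r+q)y}`. -/
noncomputable def del (μ σ r q y : ℝ) : ℝ :=
  Real.exp (gam1 μ σ (r+q) * y) - Real.exp (gam2 μ σ (r+q) * y)

/-- `δ'(y)`. -/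
noncomputable def delP (μ σ r q y : ℝ) : ℝ :=
  gam1 μ σ (r+q) * Real.exp (gam1 μ σ (r+q) * y) -
    gam2 μ σ (r+q) * Real.exp (gam2 μ σ (r+q) * y)

/-- `δ''(y)`. -/
noncomputable def delPP (μ σ r q y : ℝ) : ℝ :=
  (gam1 μ σ (r+q))^2 * Real.exp (gam1 μ σ (r+q) * y) -
    (gam2 μ σ (r+q))^2 * Real.exp (gam2 μ σ (r+q) * y)

/-- `y_u := b*_{r+q} + μ/r − μ/(r+q)`. -/
noncomputable def yUpper (μ σ r q : ℝ) : ℝ := bstar μ σ (r+q) + μ/r - μ/(r+q)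

/-- `Δ(y)`. -/
noncomputable def DeltaF (μ σ r q y : ℝ) : ℝ :=
  (1/(gam1 μ σ r - gam2 μ σ r)) *
    Real.log ((gam2 μ σ r)^2 * (delP μ σ r q y - gam1 μ σ r * del μ σ r q y) /
      ((gam1 μ σ r)^2 * (delP μ σ r q y - gam2 μ σ r * del μ σ r q y)))

/-- `b*(y) = y + Δ(y)`. -/
noncomputable def bstarY (μ σ r q y : ℝ) : ℝ := y + DeltaF μ σ r q y

noncomputable def psiF (μ σ ρ x : ℝ) : ℝ := Real.exp (gam1 μ σ ρ * x)
noncomputable def phiF (μ σ ρ x : ℝ) : ℝ := Real.exp (gam2 μ σ ρ * x)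
noncomputable def psiP (μ σ ρ x : ℝ) : ℝ := gam1 μ σ ρ * Real.exp (gam1 μ σ ρ * x)
noncomputable def phiP (μ σ ρ x : ℝ) : ℝ := gam2 μ σ ρ * Real.exp (gam2 μ σ ρ * x)

/-- `η(y;b) = ψ'_r(b)φ_r(y) − φ'_r(b)ψ_r(y)`. -/
noncomputable def etaF (μ σ r y b : ℝ) : ℝ :=
  psiP μ σ r b * phiF μ σ r y - phiP μ σ r b * psiF μ σ r y

/-- `η'(y;b)` (derivative in `y`). -/
noncomputable def etaP (μ σ r y b : ℝ) : ℝ :=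
  psiP μ σ r b * phiP μ σ r y - phiP μ σ r b * psiP μ σ r y

/-- `K₁(y)`. -/
noncomputable def K1 (μ σ r q y : ℝ) : ℝ :=
  (psiF μ σ r y * etaP μ σ r y (bstarY μ σ r q y) -
    psiP μ σ r y * etaF μ σ r y (bstarY μ σ r q y)) /
  (psiP μ σ r (bstarY μ σ r q y) *
    (del μ σ r q y * etaP μ σ r y (bstarY μ σ r q y) -
      delP μ σ r q y * etaF μ σ r y (bstarY μ σ r q y)))

/-- `K₂(y) = −K₁(y)`. -/
noncomputable def K2 (μ σ r q y : ℝ) : ℝ := -K1 μ σ r q y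

/-- `K₃(y)`. -/
noncomputable def K3 (μ σ r q y : ℝ) : ℝ :=
  (phiP μ σ r (bstarY μ σ r q y) *
      (del μ σ r q y * psiP μ σ r y - delP μ σ r q y * psiF μ σ r y) +
    del μ σ r q y * etaP μ σ r y (bstarY μ σ r q y) -
      delP μ σ r q y * etaF μ σ r y (bstarY μ σ r q y)) /
  (psiP μ σ r (bstarY μ σ r q y) *
    (del μ σ r q y * etaP μ σ r y (bstarY μ σ r q y) -
      delP μ σ r q y * etaF μ σ r y (bstarY μ σ r q y)))

/-- `K₄(y)`. -/
noncomputable def K4 (μ σ r q y : ℝ) : ℝ :=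
  (psiF μ σ r y * delP μ σ r q y - psiP μ σ r y * del μ σ r q y) /
  (del μ σ r q y * etaP μ σ r y (bstarY μ σ r q y) -
    delP μ σ r q y * etaF μ σ r y (bstarY μ σ r q y))

/-- The candidate value function `w(·;y)` in the subcritical regime. -/
noncomputable def wfun (μ σ r q y x : ℝ) : ℝ :=
  if x < y then
    K1 μ σ r q y * Real.exp (gam1 μ σ (r+q) * x) + K2 μ σ r q y * Real.exp (gam2 μ σ (r+q) * x)
  else if x < bstarY μ σ r q y then
    K3 μ σ r q y * Real.exp (gam1 μ σ r * x) + K4 μ σ r q y * Real.exp (gam2 μ σ r * x)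
  else
    K3 μ σ r q y * Real.exp (gam1 μ σ r * bstarY μ σ r q y) +
      K4 μ σ r q y * Real.exp (gam2 μ σ r * bstarY μ σ r q y) + x - bstarY μ σ r q y

/-- The function `f` characterising the critical level `y_l`. -/
noncomputable def fF (μ σ r q y : ℝ) : ℝ :=
  (-(gam1 μ σ r / gam2 μ σ r) * delP μ σ r q y + gam1 μ σ r * del μ σ r q y) *
    ((gam2 μ σ r)^2/(gam1 μ σ r)^2 *
      ((delP μ σ r q y - gam1 μ σ r * del μ σ r q y) /
        (delP μ σ r q y - gam2 μ σ r * del μ σ r q y)))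
      ^ (gam1 μ σ r / (gam1 μ σ r - gam2 μ σ r))
  - delP μ σ r q (bstar μ σ (r+q))

noncomputable def e1F (μ σ r q b : ℝ) : ℝ :=
  (phiF μ σ (r+q) b - phiP μ σ (r+q) b * Vfun μ σ (r+q) b) /
  (psiP μ σ (r+q) b * phiF μ σ (r+q) b - psiF μ σ (r+q) b * phiP μ σ (r+q) b)

noncomputable def e2F (μ σ r q b : ℝ) : ℝ :=
  (psiP μ σ (r+q) b * Vfun μ σ (r+q) b - psiF μ σ (r+q) b) /
  (psiP μ σ (r+q) b * phiF μ σ (r+q) b - psiF μ σ (r+q) b * phiP μ σ (r+q) b)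

noncomputable def e3F (μ σ r q b y : ℝ) : ℝ :=
  (e1F μ σ r q b * (phiF μ σ r y * psiP μ σ (r+q) y - phiP μ σ r y * psiF μ σ (r+q) y) +
    e2F μ σ r q b * (phiF μ σ r y * phiP μ σ (r+q) y - phiP μ σ r y * phiF μ σ (r+q) y)) /
  (psiP μ σ r y * phiF μ σ r y - psiF μ σ r y * phiP μ σ r y)

noncomputable def e4F (μ σ r q b y : ℝ) : ℝ :=
  (e1F μ σ r q b * (psiP μ σ r y * psiF μ σ (r+q) y - psiF μ σ r y * psiP μ σ (r+q) y) +
    e2F μ σ r q b * (psiP μ σ r y * phiF μ σ (r+q) y - psiF μ σ r y * phiP μ σ (r+q) y)) /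
  (psiP μ σ r y * phiF μ σ r y - psiF μ σ r y * phiP μ σ r y)

/-- The function `H(b,y)` from the critical regime. -/
noncomputable def Hfun (μ σ r q b y : ℝ) : ℝ :=
  (gam1 μ σ r - gam2 μ σ r) *
    (-gam2 μ σ r / gam1 μ σ r) ^ ((gam1 μ σ r + gam2 μ σ r)/(gam1 μ σ r - gam2 μ σ r)) *
    (e3F μ σ r q b y) ^ (-gam2 μ σ r/(gam1 μ σ r - gam2 μ σ r)) *
    (-e4F μ σ r q b y) ^ (gam1 μ σ r/(gam1 μ σ r - gam2 μ σ r))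

/-- `Λ(b,y) = −e₄(b,y)/e₃(b,y)`. -/
noncomputable def Lamfun (μ σ r q b y : ℝ) : ℝ := -e4F μ σ r q b y / e3F μ σ r q b y

/-- `L(y)`. -/
noncomputable def Lfun (μ σ r q y : ℝ) : ℝ :=
  (1/(gam1 μ σ r - gam2 μ σ r)) *
    Real.log ((gam2 μ σ r)^2/(gam1 μ σ r)^2 * Lamfun μ σ r q y y) - y

section Basics

variable {μ σ ρ : ℝ}

lemma sqrt_gt (hμ : 0 < μ) (hσ : 0 < σ) (hρ : 0 < ρ) :
    μ/σ^2 < Real.sqrt (μ^2/σ^4 + 2*ρ/σ^2) := by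
  have h4 : (0:ℝ) < σ^4 := by positivity
  have h2 : (0:ℝ) < σ^2 := by positivity
  have harg : (μ/σ^2)^2 < μ^2/σ^4 + 2*ρ/σ^2 := by
    rw [div_pow]
    have : (σ^2)^2 = σ^4 := by ring
    rw [this]
    have : 0 < 2*ρ/σ^2 := by positivity
    linarith
  nlinarith [Real.sq_sqrt (by positivity : (0:ℝ) ≤ μ^2/σ^4 + 2*ρ/σ^2),
    Real.sqrt_nonneg (μ^2/σ^4 + 2*ρ/σ^2), div_pos hμ h2]

lemma gam1_pos (hμ : 0 < μ) (hσ : 0 < σ) (hρ : 0 < ρ) : 0 < gam1 μ σ ρ :=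
  sub_pos.mpr (sqrt_gt hμ hσ hρ)

lemma gam2_neg (hμ : 0 < μ) (hσ : 0 < σ) (hρ : 0 < ρ) : gam2 μ σ ρ < 0 := by
  have h := sqrt_gt hμ hσ hρ
  have h2 : (0:ℝ) < σ^2 := by positivity
  have := div_pos hμ h2
  unfold gam2
  nlinarith [Real.sqrt_nonneg (μ^2/σ^4 + 2*ρ/σ^2)]

lemma gam_sum (μ σ ρ : ℝ) : gam1 μ σ ρ + gam2 μ σ ρ = -(2*μ/σ^2) := by
  unfold gam1 gam2; ring

lemma gam_prod (hμ : 0 < μ) (hσ : 0 < σ) (hρ : 0 < ρ) :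
    gam1 μ σ ρ * gam2 μ σ ρ = -(2*ρ/σ^2) := by
  unfold gam1 gam2
  have h := Real.sq_sqrt (by positivity : (0:ℝ) ≤ μ^2/σ^4 + 2*ρ/σ^2)
  have h4 : (σ:ℝ)^4 = σ^2*σ^2 := by ring
  linear_combination (-1 : ℝ) * h

lemma gam1_lt (hμ : 0 < μ) (hσ : 0 < σ) {ρ ρ' : ℝ} (hρ : 0 < ρ) (hρρ' : ρ < ρ') :
    gam1 μ σ ρ < gam1 μ σ ρ' := by
  unfold gam1
  have : μ^2/σ^4 + 2*ρ/σ^2 < μ^2/σ^4 + 2*ρ'/σ^2 := by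
    have h2 : (0:ℝ) < σ^2 := by positivity
    have : 2*ρ/σ^2 < 2*ρ'/σ^2 := by gcongr
    linarith
  have := Real.sqrt_lt_sqrt (by positivity) this
  linarith

lemma gam2_gt (hμ : 0 < μ) (hσ : 0 < σ) {ρ ρ' : ℝ} (hρ : 0 < ρ) (hρρ' : ρ < ρ') :
    gam2 μ σ ρ' < gam2 μ σ ρ := by
  unfold gam2
  have : μ^2/σ^4 + 2*ρ/σ^2 < μ^2/σ^4 + 2*ρ'/σ^2 := by
    have : 2*ρ/σ^2 < 2*ρ'/σ^2 := by gcongr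
    linarith
  have := Real.sqrt_lt_sqrt (by positivity) this
  linarith

end Basics

section Bstar

variable {μ σ r q : ℝ}

lemma exp_bstar (hμ : 0 < μ) (hσ : 0 < σ) (hrq : 0 < r + q) :
    Real.exp ((gam1 μ σ (r+q) - gam2 μ σ (r+q)) * bstar μ σ (r+q))
      = (gam2 μ σ (r+q))^2 / (gam1 μ σ (r+q))^2 := by
  have h1 := gam1_pos hμ hσ hrq
  have h2 := gam2_neg hμ hσ hrq
  have hne : gam1 μ σ (r+q) - gam2 μ σ (r+q) ≠ 0 := by linarith
  have hq2 : 0 < (gam2 μ σ (r+q))^2 := by nlinarith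
  have hq1 : 0 < (gam1 μ σ (r+q))^2 := by nlinarith
  rw [bstar, mul_div_cancel₀ _ hne, Real.exp_log (div_pos hq2 hq1)]

lemma bstar_key (hμ : 0 < μ) (hσ : 0 < σ) (hrq : 0 < r + q) :
    (gam1 μ σ (r+q))^2 * Real.exp (gam1 μ σ (r+q) * bstar μ σ (r+q))
      = (gam2 μ σ (r+q))^2 * Real.exp (gam2 μ σ (r+q) * bstar μ σ (r+q)) := by
  have h := exp_bstar hμ hσ hrq
  have h1 := gam1_pos hμ hσ hrq
  rw [sub_mul, Real.exp_sub] at h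
  have hE2 : Real.exp (gam2 μ σ (r+q) * bstar μ σ (r+q)) > 0 := Real.exp_pos _
  have h1sq : (gam1 μ σ (r+q))^2 ≠ 0 := pow_ne_zero 2 (ne_of_gt h1)
  field_simp at h
  rw [mul_comm (bstar μ σ (r+q)) (gam2 μ σ (r+q))] at h
  linarith [h]

lemma delP_pos (hμ : 0 < μ) (hσ : 0 < σ) (hrq : 0 < r + q) (y : ℝ) :
    0 < delP μ σ r q y := by
  have h1 := gam1_pos hμ hσ hrq
  have h2 := gam2_neg hμ hσ hrq
  unfold delP
  have := Real.exp_pos (gam1 μ σ (r+q) * y)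
  have := Real.exp_pos (gam2 μ σ (r+q) * y)
  nlinarith

lemma del_bstar (hμ : 0 < μ) (hσ : 0 < σ) (hrq : 0 < r + q) :
    (gam1 μ σ (r+q) + gam2 μ σ (r+q)) * delP μ σ r q (bstar μ σ (r+q))
      = gam1 μ σ (r+q) * gam2 μ σ (r+q) * del μ σ r q (bstar μ σ (r+q)) := by
  unfold delP del
  linear_combination bstar_key hμ hσ hrq

lemma Vfun_ge (hμ : 0 < μ) (hσ : 0 < σ) (hr : 0 < r) (hq : 0 < q)
    {b : ℝ} (hb : bstar μ σ (r+q) ≤ b) :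
    Vfun μ σ (r+q) b = μ/(r+q) + b - bstar μ σ (r+q) := by
  have hrq : 0 < r + q := by linarith
  have h1 := gam1_pos hμ hσ hrq
  have h2 := gam2_neg hμ hσ hrq
  have hs := gam_sum μ σ (r+q)
  have hp := gam_prod hμ hσ hrq
  have hD := delP_pos hμ hσ hrq (bstar μ σ (r+q))
  rw [Vfun, if_neg (not_lt.mpr hb)]
  have hfrac : (Real.exp (gam1 μ σ (r+q) * bstar μ σ (r+q)) -
      Real.exp (gam2 μ σ (r+q) * bstar μ σ (r+q))) /
      (gam1 μ σ (r+q) * Real.exp (gam1 μ σ (r+q) * bstar μ σ (r+q)) -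
        gam2 μ σ (r+q) * Real.exp (gam2 μ σ (r+q) * bstar μ σ (r+q))) = μ/(r+q) := by
    have hk := del_bstar hμ hσ hrq
    unfold del delP at hk hD
    rw [div_eq_div_iff (by linarith) (by linarith)]
    have hσ2 : (σ:ℝ)^2 ≠ 0 := by positivity
    have hs2 : (gam1 μ σ (r+q) + gam2 μ σ (r+q)) * σ^2 = -(2*μ) := by
      rw [hs]; field_simp
    have hp2 : (gam1 μ σ (r+q) * gam2 μ σ (r+q)) * σ^2 = -(2*(r+q)) := by
      rw [hp]; field_simp
    linear_combination (σ^2/2) * hk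
      - (1/2 * (gam1 μ σ (r+q) * Real.exp (gam1 μ σ (r+q) * bstar μ σ (r+q)) -
          gam2 μ σ (r+q) * Real.exp (gam2 μ σ (r+q) * bstar μ σ (r+q)))) * hs2
      + (1/2 * (Real.exp (gam1 μ σ (r+q) * bstar μ σ (r+q)) -
          Real.exp (gam2 μ σ (r+q) * bstar μ σ (r+q)))) * hp2
  rw [hfrac]

end Bstar
section Efun

variable {μ σ r q : ℝ}

lemma e1F_eq (hμ : 0 < μ) (hσ : 0 < σ) (hrq : 0 < r + q) (b : ℝ) :
    e1F μ σ r q b = (1 - gam2 μ σ (r+q) * Vfun μ σ (r+q) b) /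
      ((gam1 μ σ (r+q) - gam2 μ σ (r+q)) * Real.exp (gam1 μ σ (r+q) * b)) := by
  have h1 := gam1_pos hμ hσ hrq
  have h2 := gam2_neg hμ hσ hrq
  have hE1 := Real.exp_pos (gam1 μ σ (r+q) * b)
  have hE2 := Real.exp_pos (gam2 μ σ (r+q) * b)
  unfold e1F psiF phiF psiP phiP
  have hW : (0:ℝ) < gam1 μ σ (r+q) * Real.exp (gam1 μ σ (r+q) * b) * Real.exp (gam2 μ σ (r+q) * b) - Real.exp (gam1 μ σ (r+q) * b) * (gam2 μ σ (r+q) * Real.exp (gam2 μ σ (r+q) * b)) := by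
    nlinarith [mul_pos (show (0:ℝ) < gam1 μ σ (r+q) - gam2 μ σ (r+q) by linarith) (mul_pos hE1 hE2)]
  rw [div_eq_div_iff (ne_of_gt hW) (ne_of_gt (mul_pos (by linarith) hE1))]
  ring

lemma e2F_eq (hμ : 0 < μ) (hσ : 0 < σ) (hrq : 0 < r + q) (b : ℝ) :
    e2F μ σ r q b = (gam1 μ σ (r+q) * Vfun μ σ (r+q) b - 1) /
      ((gam1 μ σ (r+q) - gam2 μ σ (r+q)) * Real.exp (gam2 μ σ (r+q) * b)) := by
  have h1 := gam1_pos hμ hσ hrq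
  have h2 := gam2_neg hμ hσ hrq
  have hE1 := Real.exp_pos (gam1 μ σ (r+q) * b)
  have hE2 := Real.exp_pos (gam2 μ σ (r+q) * b)
  unfold e2F psiF phiF psiP phiP
  have hW : (0:ℝ) < gam1 μ σ (r+q) * Real.exp (gam1 μ σ (r+q) * b) * Real.exp (gam2 μ σ (r+q) * b) - Real.exp (gam1 μ σ (r+q) * b) * (gam2 μ σ (r+q) * Real.exp (gam2 μ σ (r+q) * b)) := by
    nlinarith [mul_pos (show (0:ℝ) < gam1 μ σ (r+q) - gam2 μ σ (r+q) by linarith) (mul_pos hE1 hE2)]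
  rw [div_eq_div_iff (ne_of_gt hW) (ne_of_gt (mul_pos (by linarith) hE2))]
  ring

lemma Vfun_bstar' (hμ : 0 < μ) (hσ : 0 < σ) (hr : 0 < r) (hq : 0 < q) :
    Vfun μ σ (r+q) (bstar μ σ (r+q)) =
      (gam1 μ σ (r+q) + gam2 μ σ (r+q)) / (gam1 μ σ (r+q) * gam2 μ σ (r+q)) := by
  have hrq : 0 < r + q := by linarith
  have h1 := gam1_pos hμ hσ hrq
  have h2 := gam2_neg hμ hσ hrq
  have hs := gam_sum μ σ (r+q)
  have hp := gam_prod hμ hσ hrq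
  rw [Vfun_ge hμ hσ hr hq le_rfl]
  rw [hs, hp]
  have hσ2 : (σ:ℝ)^2 ≠ 0 := by positivity
  have hrq' : r + q ≠ 0 := ne_of_gt hrq
  field_simp
  ring

lemma exp_bstar2 (hμ : 0 < μ) (hσ : 0 < σ) (hrq : 0 < r + q) :
    Real.exp (gam2 μ σ (r+q) * bstar μ σ (r+q)) =
      (gam1 μ σ (r+q))^2 * Real.exp (gam1 μ σ (r+q) * bstar μ σ (r+q)) / (gam2 μ σ (r+q))^2 := by
  have h2 := gam2_neg hμ hσ hrq
  have hk := bstar_key hμ hσ hrq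
  have h2sq : (gam2 μ σ (r+q))^2 ≠ 0 := pow_ne_zero 2 (ne_of_lt h2)
  rw [eq_div_iff h2sq]
  linear_combination -hk

lemma delPb_eq (hμ : 0 < μ) (hσ : 0 < σ) (hrq : 0 < r + q) :
    delP μ σ r q (bstar μ σ (r+q)) =
      gam1 μ σ (r+q) * (gam1 μ σ (r+q) - gam2 μ σ (r+q)) *
        Real.exp (gam1 μ σ (r+q) * bstar μ σ (r+q)) / (-(gam2 μ σ (r+q))) := by
  have h2 := gam2_neg hμ hσ hrq
  have hk := bstar_key hμ hσ hrq
  unfold delP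
  rw [eq_div_iff (by linarith : -(gam2 μ σ (r+q)) ≠ 0)]
  linear_combination -(bstar_key hμ hσ hrq)

end Efun
section E34

variable {μ σ r q : ℝ}

lemma wronsk_r (μ σ r y : ℝ) :
    psiP μ σ r y * phiF μ σ r y - psiF μ σ r y * phiP μ σ r y
      = (gam1 μ σ r - gam2 μ σ r) * (Real.exp (gam1 μ σ r * y) * Real.exp (gam2 μ σ r * y)) := by
  unfold psiP phiF psiF phiP; ring

lemma e3F_bstar (hμ : 0 < μ) (hσ : 0 < σ) (hr : 0 < r) (hq : 0 < q) (y : ℝ) :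
    e3F μ σ r q (bstar μ σ (r+q)) y =
      (delP μ σ r q y - gam2 μ σ r * del μ σ r q y) /
        ((gam1 μ σ r - gam2 μ σ r) * Real.exp (gam1 μ σ r * y) *
          delP μ σ r q (bstar μ σ (r+q))) := by
  have hrq : 0 < r + q := by linarith
  have ha1 := gam1_pos hμ hσ hrq
  have ha2 := gam2_neg hμ hσ hrq
  have hg1 := gam1_pos hμ hσ hr
  have hg2 := gam2_neg hμ hσ hr
  have hne : gam1 μ σ r - gam2 μ σ r ≠ 0 := by linarith
  have hane : gam1 μ σ (r+q) - gam2 μ σ (r+q) ≠ 0 := by linarith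
  have ha1' : gam1 μ σ (r+q) ≠ 0 := ne_of_gt ha1
  have ha2' : gam2 μ σ (r+q) ≠ 0 := ne_of_lt ha2
  have ha2'' : -(gam2 μ σ (r+q)) ≠ 0 := by linarith
  unfold e3F
  rw [wronsk_r, e1F_eq hμ hσ hrq, e2F_eq hμ hσ hrq, Vfun_bstar' hμ hσ hr hq,
    delPb_eq hμ hσ hrq, exp_bstar2 hμ hσ hrq]
  unfold psiF phiF psiP phiP del delP
  field_simp
  ring

lemma e4F_bstar (hμ : 0 < μ) (hσ : 0 < σ) (hr : 0 < r) (hq : 0 < q) (y : ℝ) :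
    e4F μ σ r q (bstar μ σ (r+q)) y =
      -((delP μ σ r q y - gam1 μ σ r * del μ σ r q y) /
        ((gam1 μ σ r - gam2 μ σ r) * Real.exp (gam2 μ σ r * y) *
          delP μ σ r q (bstar μ σ (r+q)))) := by
  have hrq : 0 < r + q := by linarith
  have ha1 := gam1_pos hμ hσ hrq
  have ha2 := gam2_neg hμ hσ hrq
  have hg1 := gam1_pos hμ hσ hr
  have hg2 := gam2_neg hμ hσ hr
  have hne : gam1 μ σ r - gam2 μ σ r ≠ 0 := by linarith
  have hane : gam1 μ σ (r+q) - gam2 μ σ (r+q) ≠ 0 := by linarith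
  have ha1' : gam1 μ σ (r+q) ≠ 0 := ne_of_gt ha1
  have ha2' : gam2 μ σ (r+q) ≠ 0 := ne_of_lt ha2
  have ha2'' : -(gam2 μ σ (r+q)) ≠ 0 := by linarith
  unfold e4F
  rw [wronsk_r, e1F_eq hμ hσ hrq, e2F_eq hμ hσ hrq, Vfun_bstar' hμ hσ hr hq,
    delPb_eq hμ hσ hrq, exp_bstar2 hμ hσ hrq]
  unfold psiF phiF psiP phiP del delP
  field_simp
  ring

lemma e3F_diag (hμ : 0 < μ) (hσ : 0 < σ) (hr : 0 < r) (hq : 0 < q) (y : ℝ) :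
    e3F μ σ r q y y =
      (1 - gam2 μ σ r * Vfun μ σ (r+q) y) /
        ((gam1 μ σ r - gam2 μ σ r) * Real.exp (gam1 μ σ r * y)) := by
  have hrq : 0 < r + q := by linarith
  have ha1 := gam1_pos hμ hσ hrq
  have ha2 := gam2_neg hμ hσ hrq
  have hg1 := gam1_pos hμ hσ hr
  have hg2 := gam2_neg hμ hσ hr
  have hne : gam1 μ σ r - gam2 μ σ r ≠ 0 := by linarith
  have hane : gam1 μ σ (r+q) - gam2 μ σ (r+q) ≠ 0 := by linarith
  unfold e3F
  rw [wronsk_r, e1F_eq hμ hσ hrq, e2F_eq hμ hσ hrq]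
  unfold psiF phiF psiP phiP
  field_simp
  ring

lemma e4F_diag (hμ : 0 < μ) (hσ : 0 < σ) (hr : 0 < r) (hq : 0 < q) (y : ℝ) :
    e4F μ σ r q y y =
      -((1 - gam1 μ σ r * Vfun μ σ (r+q) y) /
        ((gam1 μ σ r - gam2 μ σ r) * Real.exp (gam2 μ σ r * y))) := by
  have hrq : 0 < r + q := by linarith
  have ha1 := gam1_pos hμ hσ hrq
  have ha2 := gam2_neg hμ hσ hrq
  have hg1 := gam1_pos hμ hσ hr
  have hg2 := gam2_neg hμ hσ hr
  have hne : gam1 μ σ r - gam2 μ σ r ≠ 0 := by linarith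
  have hane : gam1 μ σ (r+q) - gam2 μ σ (r+q) ≠ 0 := by linarith
  unfold e4F
  rw [wronsk_r, e1F_eq hμ hσ hrq, e2F_eq hμ hσ hrq]
  unfold psiF phiF psiP phiP
  field_simp
  ring

end E34
section HB

variable {μ σ r q : ℝ}

lemma comb {c D E1 E2 P1 P2 K : ℝ} (b1 b2 : ℝ) (hc : 0 < c) (hD : 0 < D)
    (hE1 : 0 < E1) (hE2 : 0 < E2) (hP1 : 0 < P1) (hP2 : 0 < P2)
    (hb : b1 + b2 = 1) (hE : E1^b2 * E2^b1 = 1) :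
    c * K * (P2/(c*E1*D))^b2 * (P1/(c*E2*D))^b1 = K * (P2^b2 * P1^b1 / D) := by
  have hc2 : c^b2 * c^b1 = c := by
    rw [← Real.rpow_add hc, show b2 + b1 = 1 by linarith, Real.rpow_one]
  have hD2 : D^b2 * D^b1 = D := by
    rw [← Real.rpow_add hD, show b2 + b1 = 1 by linarith, Real.rpow_one]
  rw [Real.div_rpow hP2.le (by positivity), Real.div_rpow hP1.le (by positivity),
    Real.mul_rpow (by positivity) hD.le, Real.mul_rpow hc.le hE1.le,
    Real.mul_rpow (by positivity) hD.le, Real.mul_rpow hc.le hE2.le]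
  have h1 : (0:ℝ) < c^b2 := Real.rpow_pos_of_pos hc _
  have h2 : (0:ℝ) < c^b1 := Real.rpow_pos_of_pos hc _
  have h3 : (0:ℝ) < E1^b2 := Real.rpow_pos_of_pos hE1 _
  have h4 : (0:ℝ) < E2^b1 := Real.rpow_pos_of_pos hE2 _
  have h5 : (0:ℝ) < D^b2 := Real.rpow_pos_of_pos hD _
  have h6 : (0:ℝ) < D^b1 := Real.rpow_pos_of_pos hD _
  field_simp
  have hre : c^b2*E1^b2*D^b2*(c^b1*E2^b1*D^b1) = (c^b2*c^b1)*(E1^b2*E2^b1)*(D^b2*D^b1) := by ring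
  rw [show K * c ^ b2 * E1 ^ b2 * D ^ b2 * c ^ b1 * E2 ^ b1 * D ^ b1 = K*((c^b2*c^b1)*(E1^b2*E2^b1)*(D^b2*D^b1)) by ring, hc2, hD2, hE]
  ring

lemma P2_pos (hμ : 0 < μ) (hσ : 0 < σ) (hr : 0 < r) (hq : 0 < q) (y : ℝ) :
    0 < delP μ σ r q y - gam2 μ σ r * del μ σ r q y := by
  have hrq : 0 < r + q := by linarith
  have ha1 := gam1_pos hμ hσ hrq
  have hg2 := gam2_neg hμ hσ hr
  have ha2' := gam2_gt hμ hσ hr (by linarith : r < r + q)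
  unfold delP del
  have e1 := Real.exp_pos (gam1 μ σ (r+q) * y)
  have e2 := Real.exp_pos (gam2 μ σ (r+q) * y)
  nlinarith [mul_pos (show (0:ℝ) < gam1 μ σ (r+q) - gam2 μ σ r by linarith) e1,
    mul_pos (show (0:ℝ) < gam2 μ σ r - gam2 μ σ (r+q) by linarith) e2]

lemma P1_pos (hμ : 0 < μ) (hσ : 0 < σ) (hr : 0 < r) (hq : 0 < q) (y : ℝ) :
    0 < delP μ σ r q y - gam1 μ σ r * del μ σ r q y := by
  have hrq : 0 < r + q := by linarith
  have hg1 := gam1_pos hμ hσ hr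
  have ha2 := gam2_neg hμ hσ hrq
  have ha1' := gam1_lt hμ hσ hr (by linarith : r < r + q)
  unfold delP del
  have e1 := Real.exp_pos (gam1 μ σ (r+q) * y)
  have e2 := Real.exp_pos (gam2 μ σ (r+q) * y)
  nlinarith [mul_pos (show (0:ℝ) < gam1 μ σ (r+q) - gam1 μ σ r by linarith) e1,
    mul_pos (show (0:ℝ) < gam1 μ σ r - gam2 μ σ (r+q) by linarith) e2]

lemma Hfun_bstar_eq (hμ : 0 < μ) (hσ : 0 < σ) (hr : 0 < r) (hq : 0 < q) (y : ℝ) :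
    Hfun μ σ r q (bstar μ σ (r+q)) y =
      (-gam2 μ σ r/gam1 μ σ r)^((gam1 μ σ r + gam2 μ σ r)/(gam1 μ σ r - gam2 μ σ r)) *
      ((delP μ σ r q y - gam2 μ σ r * del μ σ r q y)^(-gam2 μ σ r/(gam1 μ σ r - gam2 μ σ r)) *
       (delP μ σ r q y - gam1 μ σ r * del μ σ r q y)^(gam1 μ σ r/(gam1 μ σ r - gam2 μ σ r)) /
       delP μ σ r q (bstar μ σ (r+q))) := by
  have hrq : 0 < r + q := by linarith
  have hg1 := gam1_pos hμ hσ hr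
  have hg2 := gam2_neg hμ hσ hr
  have hc : (0:ℝ) < gam1 μ σ r - gam2 μ σ r := by linarith
  have hD := delP_pos hμ hσ hrq (bstar μ σ (r+q))
  have hE1 := Real.exp_pos (gam1 μ σ r * y)
  have hE2 := Real.exp_pos (gam2 μ σ r * y)
  have hP2 := P2_pos hμ hσ hr hq y
  have hP1 := P1_pos hμ hσ hr hq y
  have hb : gam1 μ σ r/(gam1 μ σ r - gam2 μ σ r) + -gam2 μ σ r/(gam1 μ σ r - gam2 μ σ r) = 1 := by
    field_simp
    ring
  have hE : Real.exp (gam1 μ σ r * y)^(-gam2 μ σ r/(gam1 μ σ r - gam2 μ σ r)) *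
      Real.exp (gam2 μ σ r * y)^(gam1 μ σ r/(gam1 μ σ r - gam2 μ σ r)) = 1 := by
    rw [← Real.exp_mul, ← Real.exp_mul, ← Real.exp_add, ← Real.exp_zero]
    congr 1
    field_simp
    ring
  unfold Hfun
  rw [e3F_bstar hμ hσ hr hq y, e4F_bstar hμ hσ hr hq y, neg_neg]
  exact comb _ _ hc hD hE1 hE2 hP1 hP2 hb hE

end HB
section FF

variable {μ σ r q : ℝ}

lemma fF_eq (hμ : 0 < μ) (hσ : 0 < σ) (hr : 0 < r) (hq : 0 < q) (y : ℝ) :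
    fF μ σ r q y =
      (-gam2 μ σ r/gam1 μ σ r)^((gam1 μ σ r + gam2 μ σ r)/(gam1 μ σ r - gam2 μ σ r)) *
      ((delP μ σ r q y - gam2 μ σ r * del μ σ r q y)^(-gam2 μ σ r/(gam1 μ σ r - gam2 μ σ r)) *
       (delP μ σ r q y - gam1 μ σ r * del μ σ r q y)^(gam1 μ σ r/(gam1 μ σ r - gam2 μ σ r)))
      - delP μ σ r q (bstar μ σ (r+q)) := by
  have hg1 := gam1_pos hμ hσ hr
  have hg2 := gam2_neg hμ hσ hr
  have hP2 := P2_pos hμ hσ hr hq y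
  have hP1 := P1_pos hμ hσ hr hq y
  have hν : (0:ℝ) < -gam2 μ σ r/gam1 μ σ r := div_pos (by linarith) hg1
  have hg2' : gam2 μ σ r ≠ 0 := ne_of_lt hg2
  have hg1' : gam1 μ σ r ≠ 0 := ne_of_gt hg1
  have hne : gam1 μ σ r - gam2 μ σ r ≠ 0 := by
    have : gam2 μ σ r < gam1 μ σ r := lt_trans hg2 hg1
    linarith
  unfold fF
  congr 1
  have h1 : -(gam1 μ σ r/gam2 μ σ r) * delP μ σ r q y + gam1 μ σ r * del μ σ r q y
      = gam1 μ σ r/(-gam2 μ σ r) * (delP μ σ r q y - gam2 μ σ r * del μ σ r q y) := by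
    rw [div_mul_eq_mul_div, eq_div_iff (by linarith : -gam2 μ σ r ≠ 0)]
    field_simp
    ring
  have h2 : (gam2 μ σ r)^2/(gam1 μ σ r)^2 *
      ((delP μ σ r q y - gam1 μ σ r * del μ σ r q y) /
        (delP μ σ r q y - gam2 μ σ r * del μ σ r q y))
      = (-gam2 μ σ r/gam1 μ σ r)^(2:ℕ) *
        (delP μ σ r q y - gam1 μ σ r * del μ σ r q y) /
        (delP μ σ r q y - gam2 μ σ r * del μ σ r q y) := by
    field_simp
  rw [h1, h2]
  have hbase : (0:ℝ) < (-gam2 μ σ r/gam1 μ σ r)^(2:ℕ) *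
      (delP μ σ r q y - gam1 μ σ r * del μ σ r q y) /
      (delP μ σ r q y - gam2 μ σ r * del μ σ r q y) := by positivity
  rw [Real.rpow_def_of_pos hbase, Real.rpow_def_of_pos hν, Real.rpow_def_of_pos hP2,
    Real.rpow_def_of_pos hP1]
  rw [Real.log_div (by positivity) hP2.ne', Real.log_mul (by positivity) hP1.ne',
    Real.log_pow]
  have hmul : gam1 μ σ r/(-gam2 μ σ r) = Real.exp (-(Real.log (-gam2 μ σ r/gam1 μ σ r))) := by
    rw [Real.exp_neg, Real.exp_log hν, inv_div]
  have hP2e : delP μ σ r q y - gam2 μ σ r * del μ σ r q y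
      = Real.exp (Real.log (delP μ σ r q y - gam2 μ σ r * del μ σ r q y)) :=
    (Real.exp_log hP2).symm
  rw [hmul]
  nth_rewrite 1 [hP2e]
  simp only [← Real.exp_add]
  congr 1
  push_cast
  field_simp
  ring

end FF
section Mono1

lemma quad_pos {a b c s s0 : ℝ} (ha : 0 < a) (hc : c < 0) (hs0 : 0 < s0) (hss : s0 < s)
    (h0 : 0 ≤ a*s0^2 + b*s0 + c) : 0 < a*s^2 + b*s + c := by
  have hs : 0 < s := lt_trans hs0 hss
  have hkey : 0 < a*s*s0 - c := by nlinarith [mul_pos (mul_pos ha hs) hs0]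
  nlinarith [mul_pos (sub_pos.mpr hss) hkey, mul_nonneg h0 hs.le]

variable {μ σ r q : ℝ}

/-- derivative of δ'' at bstar vanishes -/
lemma delPP_bstar (hμ : 0 < μ) (hσ : 0 < σ) (hrq : 0 < r + q) :
    delPP μ σ r q (bstar μ σ (r+q)) = 0 := by
  unfold delPP
  linear_combination bstar_key hμ hσ hrq

/-- positivity of the N-expression at bstar -/
lemma N_bstar_pos (hμ : 0 < μ) (hσ : 0 < σ) (hr : 0 < r) (hq : 0 < q) :
    0 < -gam2 μ σ r * ((delPP μ σ r q (bstar μ σ (r+q)) - gam2 μ σ r * delP μ σ r q (bstar μ σ (r+q))) *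
        (delP μ σ r q (bstar μ σ (r+q)) - gam1 μ σ r * del μ σ r q (bstar μ σ (r+q))))
      + gam1 μ σ r * ((delPP μ σ r q (bstar μ σ (r+q)) - gam1 μ σ r * delP μ σ r q (bstar μ σ (r+q))) *
        (delP μ σ r q (bstar μ σ (r+q)) - gam2 μ σ r * del μ σ r q (bstar μ σ (r+q)))) := by
  have hrq : 0 < r + q := by linarith
  have hg1 := gam1_pos hμ hσ hr
  have hg2 := gam2_neg hμ hσ hr
  have ha1 := gam1_pos hμ hσ hrq
  have ha2 := gam2_neg hμ hσ hrq
  have hD := delP_pos hμ hσ hrq (bstar μ σ (r+q))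
  have hk := del_bstar hμ hσ hrq
  have hss : gam1 μ σ r + gam2 μ σ r = gam1 μ σ (r+q) + gam2 μ σ (r+q) := by
    rw [gam_sum, gam_sum]
  have hpr := gam_prod hμ hσ hr
  have hprq := gam_prod hμ hσ hrq
  have hdpp := delPP_bstar hμ hσ hrq
  rw [hdpp]
  -- key positivity: 0 < g1*g2*δ(b*) - (g1+g2)*δ'(b*)
  have hkey : 0 < gam1 μ σ r * gam2 μ σ r * del μ σ r q (bstar μ σ (r+q))
      - (gam1 μ σ r + gam2 μ σ r) * delP μ σ r q (bstar μ σ (r+q)) := by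
    have hmain : (gam1 μ σ r * gam2 μ σ r * del μ σ r q (bstar μ σ (r+q))
        - (gam1 μ σ r + gam2 μ σ r) * delP μ σ r q (bstar μ σ (r+q)))
        * (gam1 μ σ (r+q) * gam2 μ σ (r+q))
        = (gam1 μ σ (r+q) + gam2 μ σ (r+q)) * delP μ σ r q (bstar μ σ (r+q)) *
          (gam1 μ σ r * gam2 μ σ r - gam1 μ σ (r+q) * gam2 μ σ (r+q)) := by
      linear_combination (-(gam1 μ σ r * gam2 μ σ r)) * hk
        - (gam1 μ σ (r+q) * gam2 μ σ (r+q) * delP μ σ r q (bstar μ σ (r+q))) * hss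
    have h1 : gam1 μ σ (r+q) * gam2 μ σ (r+q) < 0 := mul_neg_of_pos_of_neg ha1 ha2
    have h2 : gam1 μ σ (r+q) + gam2 μ σ (r+q) < 0 := by
      rw [gam_sum]
      have : 0 < 2*μ/σ^2 := by positivity
      linarith
    have h3 : 0 < gam1 μ σ r * gam2 μ σ r - gam1 μ σ (r+q) * gam2 μ σ (r+q) := by
      rw [hpr, hprq]
      have h4 : 0 < 2*q/σ^2 := by positivity
      have : -(2*r/σ^2) - -(2*(r+q)/σ^2) = 2*q/σ^2 := by ring
      linarith
    nlinarith [mul_pos (mul_pos (neg_pos.mpr h2) hD) h3]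
  nlinarith [mul_pos (mul_pos (show (0:ℝ) < gam1 μ σ r - gam2 μ σ r by linarith) hD) hkey]

end Mono1
section Mono2

variable {μ σ r q : ℝ}

lemma N_pos (hμ : 0 < μ) (hσ : 0 < σ) (hr : 0 < r) (hq : 0 < q) {y : ℝ}
    (hy : bstar μ σ (r+q) < y) :
    0 < -gam2 μ σ r * ((delPP μ σ r q y - gam2 μ σ r * delP μ σ r q y) *
        (delP μ σ r q y - gam1 μ σ r * del μ σ r q y))
      + gam1 μ σ r * ((delPP μ σ r q y - gam1 μ σ r * delP μ σ r q y) *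
        (delP μ σ r q y - gam2 μ σ r * del μ σ r q y)) := by
  have hrq : 0 < r + q := by linarith
  have hg1 := gam1_pos hμ hσ hr
  have hg2 := gam2_neg hμ hσ hr
  have ha1 := gam1_pos hμ hσ hrq
  have ha2 := gam2_neg hμ hσ hrq
  have ha1g := gam1_lt hμ hσ hr (by linarith : r < r + q)
  have ha2g := gam2_gt hμ hσ hr (by linarith : r < r + q)
  set A1 := gam1 μ σ (r+q) - gam1 μ σ r with hA1
  set B1 := gam1 μ σ r - gam2 μ σ (r+q) with hB1
  set A2 := gam1 μ σ (r+q) - gam2 μ σ r with hA2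
  set B2 := gam2 μ σ r - gam2 μ σ (r+q) with hB2
  set QA := (gam1 μ σ r - gam2 μ σ r) * gam1 μ σ (r+q) * A1 * A2 with hQA
  set QC := (gam1 μ σ r - gam2 μ σ r) * gam2 μ σ (r+q) * B1 * B2 with hQC
  set QB := -gam2 μ σ r * (gam1 μ σ (r+q) * A2 * B1 + gam2 μ σ (r+q) * B2 * A1)
    + gam1 μ σ r * (gam1 μ σ (r+q) * A1 * B2 + gam2 μ σ (r+q) * B1 * A2) with hQB
  have NQ : ∀ z : ℝ,
      -gam2 μ σ r * ((delPP μ σ r q z - gam2 μ σ r * delP μ σ r q z) *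
        (delP μ σ r q z - gam1 μ σ r * del μ σ r q z))
      + gam1 μ σ r * ((delPP μ σ r q z - gam1 μ σ r * delP μ σ r q z) *
        (delP μ σ r q z - gam2 μ σ r * del μ σ r q z))
      = Real.exp (gam2 μ σ (r+q) * z)^2 *
        (QA * Real.exp ((gam1 μ σ (r+q) - gam2 μ σ (r+q)) * z)^2
          + QB * Real.exp ((gam1 μ σ (r+q) - gam2 μ σ (r+q)) * z) + QC) := by
    intro z
    unfold del delP delPP
    rw [show gam1 μ σ (r+q) * z = (gam1 μ σ (r+q) - gam2 μ σ (r+q))*z + gam2 μ σ (r+q)*z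
      by ring, Real.exp_add, hQA, hQB, hQC, hA1, hA2, hB1, hB2]
    ring
  have hNb := N_bstar_pos hμ hσ hr hq
  rw [NQ (bstar μ σ (r+q))] at hNb
  have h0 : 0 ≤ QA * Real.exp ((gam1 μ σ (r+q) - gam2 μ σ (r+q)) * bstar μ σ (r+q))^2
      + QB * Real.exp ((gam1 μ σ (r+q) - gam2 μ σ (r+q)) * bstar μ σ (r+q)) + QC := by
    nlinarith [pow_pos (Real.exp_pos (gam2 μ σ (r+q) * bstar μ σ (r+q))) 2]
  have hQApos : 0 < QA := by
    rw [hQA, hA1, hA2]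
    have h1 : (0:ℝ) < gam1 μ σ (r+q) - gam1 μ σ r := by linarith
    have h2 : (0:ℝ) < gam1 μ σ (r+q) - gam2 μ σ r := by linarith
    have h3 : (0:ℝ) < gam1 μ σ r - gam2 μ σ r := by linarith
    positivity
  have hQCneg : QC < 0 := by
    rw [hQC, hB1, hB2]
    have hb1 : (0:ℝ) < gam1 μ σ r - gam2 μ σ (r+q) := by linarith
    have hb2 : (0:ℝ) < gam2 μ σ r - gam2 μ σ (r+q) := by linarith
    have hb3 : (0:ℝ) < gam1 μ σ r - gam2 μ σ r := by linarith
    nlinarith [mul_pos (mul_pos hb3 hb1) hb2]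
  have hss : Real.exp ((gam1 μ σ (r+q) - gam2 μ σ (r+q)) * bstar μ σ (r+q))
      < Real.exp ((gam1 μ σ (r+q) - gam2 μ σ (r+q)) * y) := by
    apply Real.exp_lt_exp.mpr
    have : (0:ℝ) < gam1 μ σ (r+q) - gam2 μ σ (r+q) := by linarith
    exact (mul_lt_mul_iff_right₀ this).mpr hy
  have hquad := quad_pos hQApos hQCneg
    (Real.exp_pos ((gam1 μ σ (r+q) - gam2 μ σ (r+q)) * bstar μ σ (r+q))) hss h0
  rw [NQ y]
  exact mul_pos (pow_pos (Real.exp_pos _) 2) hquad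

end Mono2
section Mono3

variable {μ σ r q : ℝ}

lemma M_hasDeriv (hμ : 0 < μ) (hσ : 0 < σ) (hr : 0 < r) (hq : 0 < q) (y : ℝ) :
    HasDerivAt (fun z => (-gam2 μ σ r/gam1 μ σ r)^((gam1 μ σ r + gam2 μ σ r)/(gam1 μ σ r - gam2 μ σ r)) *
      ((delP μ σ r q z - gam2 μ σ r * del μ σ r q z)^(-gam2 μ σ r/(gam1 μ σ r - gam2 μ σ r)) *
       (delP μ σ r q z - gam1 μ σ r * del μ σ r q z)^(gam1 μ σ r/(gam1 μ σ r - gam2 μ σ r))))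
      ((-gam2 μ σ r/gam1 μ σ r)^((gam1 μ σ r + gam2 μ σ r)/(gam1 μ σ r - gam2 μ σ r)) *
        (((delPP μ σ r q y - gam2 μ σ r * delP μ σ r q y) * (-gam2 μ σ r/(gam1 μ σ r - gam2 μ σ r)) *
           (delP μ σ r q y - gam2 μ σ r * del μ σ r q y)^(-gam2 μ σ r/(gam1 μ σ r - gam2 μ σ r) - 1)) *
          (delP μ σ r q y - gam1 μ σ r * del μ σ r q y)^(gam1 μ σ r/(gam1 μ σ r - gam2 μ σ r)) +
         (delP μ σ r q y - gam2 μ σ r * del μ σ r q y)^(-gam2 μ σ r/(gam1 μ σ r - gam2 μ σ r)) *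
          ((delPP μ σ r q y - gam1 μ σ r * delP μ σ r q y) * (gam1 μ σ r/(gam1 μ σ r - gam2 μ σ r)) *
           (delP μ σ r q y - gam1 μ σ r * del μ σ r q y)^(gam1 μ σ r/(gam1 μ σ r - gam2 μ σ r) - 1)))) y := by
  have hP2 := P2_pos hμ hσ hr hq y
  have hP1 := P1_pos hμ hσ hr hq y
  have hE1 : HasDerivAt (fun z : ℝ => Real.exp (gam1 μ σ (r+q) * z))
      (Real.exp (gam1 μ σ (r+q) * y) * (gam1 μ σ (r+q) * 1)) y :=
    ((hasDerivAt_id y).const_mul (gam1 μ σ (r+q))).exp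
  have hE2 : HasDerivAt (fun z : ℝ => Real.exp (gam2 μ σ (r+q) * z))
      (Real.exp (gam2 μ σ (r+q) * y) * (gam2 μ σ (r+q) * 1)) y :=
    ((hasDerivAt_id y).const_mul (gam2 μ σ (r+q))).exp
  have hdel : HasDerivAt (fun z => del μ σ r q z)
      (Real.exp (gam1 μ σ (r+q) * y) * (gam1 μ σ (r+q) * 1) -
        Real.exp (gam2 μ σ (r+q) * y) * (gam2 μ σ (r+q) * 1)) y := by
    simp only [del]; exact hE1.sub hE2
  have hdelP : HasDerivAt (fun z => delP μ σ r q z)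
      (gam1 μ σ (r+q) * (Real.exp (gam1 μ σ (r+q) * y) * (gam1 μ σ (r+q) * 1)) -
        gam2 μ σ (r+q) * (Real.exp (gam2 μ σ (r+q) * y) * (gam2 μ σ (r+q) * 1))) y := by
    simp only [delP]; exact (hE1.const_mul _).sub (hE2.const_mul _)
  have hP2d : HasDerivAt (fun z => delP μ σ r q z - gam2 μ σ r * del μ σ r q z)
      (delPP μ σ r q y - gam2 μ σ r * delP μ σ r q y) y := by
    have := hdelP.sub (hdel.const_mul (gam2 μ σ r))
    refine this.congr_deriv ?_
    unfold delPP delP; ring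
  have hP1d : HasDerivAt (fun z => delP μ σ r q z - gam1 μ σ r * del μ σ r q z)
      (delPP μ σ r q y - gam1 μ σ r * delP μ σ r q y) y := by
    have := hdelP.sub (hdel.const_mul (gam1 μ σ r))
    refine this.congr_deriv ?_
    unfold delPP delP; ring
  have h2 := hP2d.rpow_const (p := -gam2 μ σ r/(gam1 μ σ r - gam2 μ σ r)) (Or.inl hP2.ne')
  have h1 := hP1d.rpow_const (p := gam1 μ σ r/(gam1 μ σ r - gam2 μ σ r)) (Or.inl hP1.ne')
  exact (h2.mul h1).const_mul _

lemma M_strictMono (hμ : 0 < μ) (hσ : 0 < σ) (hr : 0 < r) (hq : 0 < q) {c : ℝ}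
    (hc : bstar μ σ (r+q) ≤ c) :
    StrictMonoOn (fun z => (-gam2 μ σ r/gam1 μ σ r)^((gam1 μ σ r + gam2 μ σ r)/(gam1 μ σ r - gam2 μ σ r)) *
      ((delP μ σ r q z - gam2 μ σ r * del μ σ r q z)^(-gam2 μ σ r/(gam1 μ σ r - gam2 μ σ r)) *
       (delP μ σ r q z - gam1 μ σ r * del μ σ r q z)^(gam1 μ σ r/(gam1 μ σ r - gam2 μ σ r))))
      (Set.Ici c) := by
  have hg1 := gam1_pos hμ hσ hr
  have hg2 := gam2_neg hμ hσ hr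
  have hgg : (0:ℝ) < gam1 μ σ r - gam2 μ σ r := by linarith
  have hν : (0:ℝ) < -gam2 μ σ r/gam1 μ σ r := div_pos (by linarith) hg1
  apply strictMonoOn_of_deriv_pos (convex_Ici c)
  · exact fun y _ => ((M_hasDeriv hμ hσ hr hq y).differentiableAt).continuousAt.continuousWithinAt
  · intro y hy
    rw [interior_Ici] at hy
    have hby : bstar μ σ (r+q) < y := lt_of_le_of_lt hc hy
    rw [(M_hasDeriv hμ hσ hr hq y).deriv]
    have hP2 := P2_pos hμ hσ hr hq y
    have hP1 := P1_pos hμ hσ hr hq y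
    have hT2 : (0:ℝ) < (delP μ σ r q y - gam2 μ σ r * del μ σ r q y)^(-gam2 μ σ r/(gam1 μ σ r - gam2 μ σ r)) :=
      Real.rpow_pos_of_pos hP2 _
    have hT1 : (0:ℝ) < (delP μ σ r q y - gam1 μ σ r * del μ σ r q y)^(gam1 μ σ r/(gam1 μ σ r - gam2 μ σ r)) :=
      Real.rpow_pos_of_pos hP1 _
    have hS2 : (delP μ σ r q y - gam2 μ σ r * del μ σ r q y)^(-gam2 μ σ r/(gam1 μ σ r - gam2 μ σ r) - 1)
        = (delP μ σ r q y - gam2 μ σ r * del μ σ r q y)^(-gam2 μ σ r/(gam1 μ σ r - gam2 μ σ r)) /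
          (delP μ σ r q y - gam2 μ σ r * del μ σ r q y) :=
      Real.rpow_sub_one hP2.ne' _
    have hS1 : (delP μ σ r q y - gam1 μ σ r * del μ σ r q y)^(gam1 μ σ r/(gam1 μ σ r - gam2 μ σ r) - 1)
        = (delP μ σ r q y - gam1 μ σ r * del μ σ r q y)^(gam1 μ σ r/(gam1 μ σ r - gam2 μ σ r)) /
          (delP μ σ r q y - gam1 μ σ r * del μ σ r q y) :=
      Real.rpow_sub_one hP1.ne' _
    rw [hS2, hS1]
    have heq : (-gam2 μ σ r/gam1 μ σ r)^((gam1 μ σ r + gam2 μ σ r)/(gam1 μ σ r - gam2 μ σ r)) *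
        (((delPP μ σ r q y - gam2 μ σ r * delP μ σ r q y) * (-gam2 μ σ r/(gam1 μ σ r - gam2 μ σ r)) *
           ((delP μ σ r q y - gam2 μ σ r * del μ σ r q y)^(-gam2 μ σ r/(gam1 μ σ r - gam2 μ σ r)) /
            (delP μ σ r q y - gam2 μ σ r * del μ σ r q y))) *
          (delP μ σ r q y - gam1 μ σ r * del μ σ r q y)^(gam1 μ σ r/(gam1 μ σ r - gam2 μ σ r)) +
         (delP μ σ r q y - gam2 μ σ r * del μ σ r q y)^(-gam2 μ σ r/(gam1 μ σ r - gam2 μ σ r)) *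
          ((delPP μ σ r q y - gam1 μ σ r * delP μ σ r q y) * (gam1 μ σ r/(gam1 μ σ r - gam2 μ σ r)) *
           ((delP μ σ r q y - gam1 μ σ r * del μ σ r q y)^(gam1 μ σ r/(gam1 μ σ r - gam2 μ σ r)) /
            (delP μ σ r q y - gam1 μ σ r * del μ σ r q y))))
        = ((-gam2 μ σ r/gam1 μ σ r)^((gam1 μ σ r + gam2 μ σ r)/(gam1 μ σ r - gam2 μ σ r)) *
            (delP μ σ r q y - gam2 μ σ r * del μ σ r q y)^(-gam2 μ σ r/(gam1 μ σ r - gam2 μ σ r)) *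
            (delP μ σ r q y - gam1 μ σ r * del μ σ r q y)^(gam1 μ σ r/(gam1 μ σ r - gam2 μ σ r)) /
            ((delP μ σ r q y - gam2 μ σ r * del μ σ r q y) *
             (delP μ σ r q y - gam1 μ σ r * del μ σ r q y) * (gam1 μ σ r - gam2 μ σ r))) *
          (-gam2 μ σ r * ((delPP μ σ r q y - gam2 μ σ r * delP μ σ r q y) *
              (delP μ σ r q y - gam1 μ σ r * del μ σ r q y))
            + gam1 μ σ r * ((delPP μ σ r q y - gam1 μ σ r * delP μ σ r q y) *
              (delP μ σ r q y - gam2 μ σ r * del μ σ r q y))) := by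
      field_simp
    rw [heq]
    exact mul_pos (div_pos (by positivity) (by positivity)) (N_pos hμ hσ hr hq hby)

end Mono3
section Diag

variable {μ σ r q : ℝ}

lemma comb2 {c E1 E2 P1 P2 K : ℝ} (b1 b2 : ℝ) (hc : 0 < c)
    (hE1 : 0 < E1) (hE2 : 0 < E2) (hP1 : 0 < P1) (hP2 : 0 < P2)
    (hb : b1 + b2 = 1) (hE : E1^b2 * E2^b1 = 1) :
    c * K * (P2/(c*E1))^b2 * (P1/(c*E2))^b1 = K * (P2^b2 * P1^b1) := by
  have hc2 : c^b2 * c^b1 = c := by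
    rw [← Real.rpow_add hc, show b2 + b1 = 1 by linarith, Real.rpow_one]
  rw [Real.div_rpow hP2.le (by positivity), Real.div_rpow hP1.le (by positivity),
    Real.mul_rpow hc.le hE1.le, Real.mul_rpow hc.le hE2.le]
  have h1 : (0:ℝ) < c^b2 := Real.rpow_pos_of_pos hc _
  have h2 : (0:ℝ) < c^b1 := Real.rpow_pos_of_pos hc _
  have h3 : (0:ℝ) < E1^b2 := Real.rpow_pos_of_pos hE1 _
  have h4 : (0:ℝ) < E2^b1 := Real.rpow_pos_of_pos hE2 _
  field_simp
  have hre : c^b2*E1^b2*(c^b1*E2^b1) = (c^b2*c^b1)*(E1^b2*E2^b1) := by ring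
  rw [show K * c ^ b2 * E1 ^ b2 * c ^ b1 * E2 ^ b1 = K*((c^b2*c^b1)*(E1^b2*E2^b1)) by ring, hc2, hE]
  ring

lemma mu_gam_key (hμ : 0 < μ) (hσ : 0 < σ) (hr : 0 < r) :
    μ * (gam1 μ σ r * gam2 μ σ r) = (gam1 μ σ r + gam2 μ σ r) * r := by
  have hs := gam_sum μ σ r
  have hp := gam_prod hμ hσ hr
  have hσ2 : (σ:ℝ)^2 ≠ 0 := by positivity
  field_simp at hs hp
  have h : (μ * (gam1 μ σ r * gam2 μ σ r))*σ^2 = ((gam1 μ σ r + gam2 μ σ r) * r)*σ^2 := by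
    linear_combination μ*hp - r*hs
  exact mul_right_cancel₀ hσ2 h

lemma one_sub2 (hμ : 0 < μ) (hσ : 0 < σ) (hr : 0 < r) :
    1 - gam2 μ σ r * (μ/r) = -gam2 μ σ r / gam1 μ σ r := by
  have hg1 := gam1_pos hμ hσ hr
  have hg2 := gam2_neg hμ hσ hr
  have key := mu_gam_key hμ hσ hr
  field_simp [ne_of_gt hg1, ne_of_lt hg2, ne_of_gt hr]
  linear_combination -key

lemma one_sub1 (hμ : 0 < μ) (hσ : 0 < σ) (hr : 0 < r) :
    1 - gam1 μ σ r * (μ/r) = -gam1 μ σ r / gam2 μ σ r := by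
  have hg1 := gam1_pos hμ hσ hr
  have hg2 := gam2_neg hμ hσ hr
  have key := mu_gam_key hμ hσ hr
  field_simp [ne_of_gt hg1, ne_of_lt hg2, ne_of_gt hr]
  linear_combination -key

lemma vdiag_pos (hμ : 0 < μ) (hσ : 0 < σ) (hr : 0 < r) (hq : 0 < q) {y : ℝ}
    (hb : bstar μ σ (r+q) ≤ y) : 0 < μ/(r+q) + y - bstar μ σ (r+q) := by
  have : 0 < μ/(r+q) := by positivity
  linarith

lemma vdiag_le (hμ : 0 < μ) (hσ : 0 < σ) (hr : 0 < r) (hq : 0 < q) {y : ℝ}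
    (hu : y ≤ yUpper μ σ r q) : μ/(r+q) + y - bstar μ σ (r+q) ≤ μ/r := by
  unfold yUpper at hu
  linarith

lemma P1diag_pos (hμ : 0 < μ) (hσ : 0 < σ) (hr : 0 < r) (hq : 0 < q) {v : ℝ}
    (hv : v ≤ μ/r) : 0 < 1 - gam1 μ σ r * v := by
  have hg1 := gam1_pos hμ hσ hr
  have hg2 := gam2_neg hμ hσ hr
  have h1 := one_sub1 hμ hσ hr
  have hnu : (0:ℝ) < -gam1 μ σ r / gam2 μ σ r := div_pos_of_neg_of_neg (by linarith) hg2
  have : gam1 μ σ r * v ≤ gam1 μ σ r * (μ/r) := mul_le_mul_of_nonneg_left hv hg1.le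
  linarith

lemma P2diag_pos (hμ : 0 < μ) (hσ : 0 < σ) (hr : 0 < r) {v : ℝ}
    (hv : 0 ≤ v) : 0 < 1 - gam2 μ σ r * v := by
  have hg2 := gam2_neg hμ hσ hr
  nlinarith

lemma Hfun_diag_eq (hμ : 0 < μ) (hσ : 0 < σ) (hr : 0 < r) (hq : 0 < q) {y : ℝ}
    (hb : bstar μ σ (r+q) ≤ y) (hu : y ≤ yUpper μ σ r q) :
    Hfun μ σ r q y y =
      (-gam2 μ σ r/gam1 μ σ r)^((gam1 μ σ r + gam2 μ σ r)/(gam1 μ σ r - gam2 μ σ r)) *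
      ((1 - gam2 μ σ r * (μ/(r+q) + y - bstar μ σ (r+q)))^(-gam2 μ σ r/(gam1 μ σ r - gam2 μ σ r)) *
       (1 - gam1 μ σ r * (μ/(r+q) + y - bstar μ σ (r+q)))^(gam1 μ σ r/(gam1 μ σ r - gam2 μ σ r))) := by
  have hg1 := gam1_pos hμ hσ hr
  have hg2 := gam2_neg hμ hσ hr
  have hc : (0:ℝ) < gam1 μ σ r - gam2 μ σ r := by linarith
  have hv0 := vdiag_pos hμ hσ hr hq hb
  have hvr := vdiag_le hμ hσ hr hq hu
  have hP2 := P2diag_pos hμ hσ hr hv0.le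
  have hP1 := P1diag_pos hμ hσ hr hq hvr
  have hb' : gam1 μ σ r/(gam1 μ σ r - gam2 μ σ r) + -gam2 μ σ r/(gam1 μ σ r - gam2 μ σ r) = 1 := by
    field_simp
    ring
  have hE : Real.exp (gam1 μ σ r * y)^(-gam2 μ σ r/(gam1 μ σ r - gam2 μ σ r)) *
      Real.exp (gam2 μ σ r * y)^(gam1 μ σ r/(gam1 μ σ r - gam2 μ σ r)) = 1 := by
    rw [← Real.exp_mul, ← Real.exp_mul, ← Real.exp_add, ← Real.exp_zero]
    congr 1
    field_simp
    ring
  unfold Hfun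
  rw [e3F_diag hμ hσ hr hq y, e4F_diag hμ hσ hr hq y, neg_neg, Vfun_ge hμ hσ hr hq hb]
  exact comb2 _ _ hc (Real.exp_pos _) (Real.exp_pos _) hP1 hP2 hb' hE

lemma Hfun_yu (hμ : 0 < μ) (hσ : 0 < σ) (hr : 0 < r) (hq : 0 < q) :
    Hfun μ σ r q (yUpper μ σ r q) (yUpper μ σ r q) = 1 := by
  have hg1 := gam1_pos hμ hσ hr
  have hg2 := gam2_neg hμ hσ hr
  have hν : (0:ℝ) < -gam2 μ σ r/gam1 μ σ r := div_pos (by linarith) hg1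
  have hrq : 0 < r + q := by linarith
  have hbu : bstar μ σ (r+q) ≤ yUpper μ σ r q := by
    unfold yUpper
    have h1 : μ/(r+q) ≤ μ/r := by
      apply div_le_div_of_nonneg_left hμ.le hr ?_
      all_goals linarith
    linarith
  rw [Hfun_diag_eq hμ hσ hr hq hbu le_rfl]
  have hveq : μ/(r+q) + yUpper μ σ r q - bstar μ σ (r+q) = μ/r := by
    unfold yUpper; ring
  rw [hveq, one_sub2 hμ hσ hr, one_sub1 hμ hσ hr]
  have hrw : -gam1 μ σ r / gam2 μ σ r = (-gam2 μ σ r/gam1 μ σ r)⁻¹ := by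
    rw [inv_div]
    rw [div_eq_div_iff (ne_of_lt hg2) (by linarith : -gam2 μ σ r ≠ 0)]
    ring
  rw [hrw, Real.inv_rpow hν.le, ← Real.rpow_neg hν.le, ← Real.rpow_add hν, ← Real.rpow_add hν]
  have hz : (gam1 μ σ r + gam2 μ σ r)/(gam1 μ σ r - gam2 μ σ r) +
      (-gam2 μ σ r/(gam1 μ σ r - gam2 μ σ r) + -(gam1 μ σ r/(gam1 μ σ r - gam2 μ σ r))) = 0 := by
    rw [← neg_div, ← add_div, ← add_div,
      show gam1 μ σ r + gam2 μ σ r + (-gam2 μ σ r + -gam1 μ σ r) = 0 by ring, zero_div]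
  rw [hz, Real.rpow_zero]

end Diag
section GMono

variable {μ σ r q : ℝ}

lemma G_hasDeriv (hμ : 0 < μ) (hσ : 0 < σ) (hr : 0 < r) {v : ℝ}
    (hP2 : 1 - gam2 μ σ r * v ≠ 0) (hP1 : 1 - gam1 μ σ r * v ≠ 0) :
    HasDerivAt (fun w => (-gam2 μ σ r/gam1 μ σ r)^((gam1 μ σ r + gam2 μ σ r)/(gam1 μ σ r - gam2 μ σ r)) *
      ((1 - gam2 μ σ r * w)^(-gam2 μ σ r/(gam1 μ σ r - gam2 μ σ r)) *
       (1 - gam1 μ σ r * w)^(gam1 μ σ r/(gam1 μ σ r - gam2 μ σ r))))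
      ((-gam2 μ σ r/gam1 μ σ r)^((gam1 μ σ r + gam2 μ σ r)/(gam1 μ σ r - gam2 μ σ r)) *
        (((0 - gam2 μ σ r * 1) * (-gam2 μ σ r/(gam1 μ σ r - gam2 μ σ r)) *
           (1 - gam2 μ σ r * v)^(-gam2 μ σ r/(gam1 μ σ r - gam2 μ σ r) - 1)) *
          (1 - gam1 μ σ r * v)^(gam1 μ σ r/(gam1 μ σ r - gam2 μ σ r)) +
         (1 - gam2 μ σ r * v)^(-gam2 μ σ r/(gam1 μ σ r - gam2 μ σ r)) *
          ((0 - gam1 μ σ r * 1) * (gam1 μ σ r/(gam1 μ σ r - gam2 μ σ r)) *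
           (1 - gam1 μ σ r * v)^(gam1 μ σ r/(gam1 μ σ r - gam2 μ σ r) - 1)))) v := by
  have h2 : HasDerivAt (fun w : ℝ => 1 - gam2 μ σ r * w) (0 - gam2 μ σ r * 1) v :=
    (hasDerivAt_const v 1).sub ((hasDerivAt_id v).const_mul _)
  have h1 : HasDerivAt (fun w : ℝ => 1 - gam1 μ σ r * w) (0 - gam1 μ σ r * 1) v :=
    (hasDerivAt_const v 1).sub ((hasDerivAt_id v).const_mul _)
  exact ((h2.rpow_const (Or.inl hP2)).mul (h1.rpow_const (Or.inl hP1))).const_mul _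

lemma G_strictMono (hμ : 0 < μ) (hσ : 0 < σ) (hr : 0 < r) (hq : 0 < q) :
    StrictMonoOn (fun v => (-gam2 μ σ r/gam1 μ σ r)^((gam1 μ σ r + gam2 μ σ r)/(gam1 μ σ r - gam2 μ σ r)) *
      ((1 - gam2 μ σ r * v)^(-gam2 μ σ r/(gam1 μ σ r - gam2 μ σ r)) *
       (1 - gam1 μ σ r * v)^(gam1 μ σ r/(gam1 μ σ r - gam2 μ σ r)))) (Set.Icc 0 (μ/r)) := by
  have hg1 := gam1_pos hμ hσ hr
  have hg2 := gam2_neg hμ hσ hr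
  have hgg : (0:ℝ) < gam1 μ σ r - gam2 μ σ r := by linarith
  apply strictMonoOn_of_deriv_pos (convex_Icc _ _)
  · apply Continuous.continuousOn
    apply Continuous.mul continuous_const
    apply Continuous.mul
    · exact (continuous_const.sub (continuous_const.mul continuous_id)).rpow_const
        (fun x => Or.inr (div_pos (by linarith) hgg).le)
    · exact (continuous_const.sub (continuous_const.mul continuous_id)).rpow_const
        (fun x => Or.inr (div_pos hg1 hgg).le)
  · intro v hv
    rw [interior_Icc] at hv
    have hP2 := P2diag_pos hμ hσ hr hv.1.le
    have hP1 := P1diag_pos hμ hσ hr hq hv.2.le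
    rw [(G_hasDeriv hμ hσ hr hP2.ne' hP1.ne').deriv]
    have hT2 : (0:ℝ) < (1 - gam2 μ σ r * v)^(-gam2 μ σ r/(gam1 μ σ r - gam2 μ σ r)) :=
      Real.rpow_pos_of_pos hP2 _
    have hT1 : (0:ℝ) < (1 - gam1 μ σ r * v)^(gam1 μ σ r/(gam1 μ σ r - gam2 μ σ r)) :=
      Real.rpow_pos_of_pos hP1 _
    have hν : (0:ℝ) < -gam2 μ σ r/gam1 μ σ r := div_pos (by linarith) hg1
    rw [Real.rpow_sub_one hP2.ne' , Real.rpow_sub_one hP1.ne']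
    have hbr : 0 < -(gam1 μ σ r + gam2 μ σ r) + gam1 μ σ r * gam2 μ σ r * v := by
      have hmr : gam1 μ σ r * gam2 μ σ r * (μ/r) = gam1 μ σ r + gam2 μ σ r := by
        rw [show gam1 μ σ r * gam2 μ σ r * (μ/r) = μ*(gam1 μ σ r * gam2 μ σ r)/r by ring,
          mu_gam_key hμ hσ hr, mul_div_cancel_right₀ _ (ne_of_gt hr)]
      have hneg : gam1 μ σ r * gam2 μ σ r < 0 := mul_neg_of_pos_of_neg hg1 hg2
      have := mul_lt_mul_of_neg_left hv.2 hneg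
      rw [hmr] at this
      linarith
    have heq : (-gam2 μ σ r/gam1 μ σ r)^((gam1 μ σ r + gam2 μ σ r)/(gam1 μ σ r - gam2 μ σ r)) *
        (((0 - gam2 μ σ r * 1) * (-gam2 μ σ r/(gam1 μ σ r - gam2 μ σ r)) *
           ((1 - gam2 μ σ r * v)^(-gam2 μ σ r/(gam1 μ σ r - gam2 μ σ r)) / (1 - gam2 μ σ r * v))) *
          (1 - gam1 μ σ r * v)^(gam1 μ σ r/(gam1 μ σ r - gam2 μ σ r)) +
         (1 - gam2 μ σ r * v)^(-gam2 μ σ r/(gam1 μ σ r - gam2 μ σ r)) *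
          ((0 - gam1 μ σ r * 1) * (gam1 μ σ r/(gam1 μ σ r - gam2 μ σ r)) *
           ((1 - gam1 μ σ r * v)^(gam1 μ σ r/(gam1 μ σ r - gam2 μ σ r)) / (1 - gam1 μ σ r * v))))
        = ((-gam2 μ σ r/gam1 μ σ r)^((gam1 μ σ r + gam2 μ σ r)/(gam1 μ σ r - gam2 μ σ r)) *
            (1 - gam2 μ σ r * v)^(-gam2 μ σ r/(gam1 μ σ r - gam2 μ σ r)) *
            (1 - gam1 μ σ r * v)^(gam1 μ σ r/(gam1 μ σ r - gam2 μ σ r)) /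
            ((1 - gam2 μ σ r * v) * (1 - gam1 μ σ r * v) * (gam1 μ σ r - gam2 μ σ r))) *
          ((gam1 μ σ r - gam2 μ σ r) *
            (-(gam1 μ σ r + gam2 μ σ r) + gam1 μ σ r * gam2 μ σ r * v)) := by
      field_simp
      ring
    rw [heq]
    exact mul_pos (div_pos (by positivity) (by positivity)) (mul_pos hgg hbr)

end GMono

/-- `H(b*_{r+q}, y_l) = 1`, `H(y_u, y_u) = 1`, and the maps
`y ↦ H(b*_{r+q}, y)` and `y ↦ H(y,y)` are strictly increasing on `(y_l, y_u)`. -/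
theorem stmt18 (μ σ r q : ℝ) (hμ : 0 < μ) (hσ : 0 < σ) (hr : 0 < r) (hq : 0 < q)
    (yl : ℝ) (hyl : yl ∈ Set.Ioo 0 (yUpper μ σ r q)) (hylf : fF μ σ r q yl = 0)
    (hyluniq : ∀ y ∈ Set.Ioo 0 (yUpper μ σ r q), fF μ σ r q y = 0 → y = yl)
    (hylb : yl ∈ Set.Ioo (bstar μ σ (r+q)) (yUpper μ σ r q)) :
    Hfun μ σ r q (bstar μ σ (r+q)) yl = 1 ∧
    Hfun μ σ r q (yUpper μ σ r q) (yUpper μ σ r q) = 1 ∧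
    StrictMonoOn (fun y => Hfun μ σ r q (bstar μ σ (r+q)) y) (Set.Ioo yl (yUpper μ σ r q)) ∧
    StrictMonoOn (fun y => Hfun μ σ r q y y) (Set.Ioo yl (yUpper μ σ r q)) := by
  have hrq : 0 < r + q := by linarith
  have hD := delP_pos hμ hσ hrq (bstar μ σ (r+q))
  obtain ⟨hylb1, hylb2⟩ := hylb
  refine ⟨?_, Hfun_yu hμ hσ hr hq, ?_, ?_⟩
  · -- H(b*, yl) = 1
    rw [Hfun_bstar_eq hμ hσ hr hq yl]
    have hff := fF_eq hμ hσ hr hq yl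
    rw [hylf] at hff
    rw [← mul_div_assoc]
    have hM : (-gam2 μ σ r/gam1 μ σ r)^((gam1 μ σ r + gam2 μ σ r)/(gam1 μ σ r - gam2 μ σ r)) *
        ((delP μ σ r q yl - gam2 μ σ r * del μ σ r q yl)^(-gam2 μ σ r/(gam1 μ σ r - gam2 μ σ r)) *
         (delP μ σ r q yl - gam1 μ σ r * del μ σ r q yl)^(gam1 μ σ r/(gam1 μ σ r - gam2 μ σ r)))
        = delP μ σ r q (bstar μ σ (r+q)) := by linarith
    rw [hM, div_self hD.ne']
  · -- strict mono of H(b*, ·)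
    intro a ha b hb hab
    simp only
    rw [Hfun_bstar_eq hμ hσ hr hq a, Hfun_bstar_eq hμ hσ hr hq b]
    have hmono := M_strictMono hμ hσ hr hq (le_of_lt hylb1)
      (Set.mem_Ici.mpr ha.1.le) (Set.mem_Ici.mpr hb.1.le) hab
    simp only at hmono
    rw [← mul_div_assoc, ← mul_div_assoc]
    exact (div_lt_div_iff_of_pos_right hD).mpr hmono
  · -- strict mono of H(y,y)
    intro a ha b hb hab
    simp only
    have hba : bstar μ σ (r+q) ≤ a := le_of_lt (lt_trans hylb1 ha.1)
    have hbb : bstar μ σ (r+q) ≤ b := le_of_lt (lt_trans hylb1 hb.1)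
    rw [Hfun_diag_eq hμ hσ hr hq hba ha.2.le, Hfun_diag_eq hμ hσ hr hq hbb hb.2.le]
    have hva : μ/(r+q) + a - bstar μ σ (r+q) ∈ Set.Icc 0 (μ/r) :=
      ⟨(vdiag_pos hμ hσ hr hq hba).le, vdiag_le hμ hσ hr hq ha.2.le⟩
    have hvb : μ/(r+q) + b - bstar μ σ (r+q) ∈ Set.Icc 0 (μ/r) :=
      ⟨(vdiag_pos hμ hσ hr hq hbb).le, vdiag_le hμ hσ hr hq hb.2.le⟩
    exact G_strictMono hμ hσ hr hq hva hvb (by linarith)
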